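/- arXiv:1509.05057 — 5 statements merged into one kernel-verified Lean document; each statement's English description precedes it below -/
import Mathlib

section
/- For any finite simple graph G, the maximum of the difference d(X) = |X| - |N(X)| over all subsets X of V(G) equals the maximum of d(S) over all independent subsets S of V(G). -/
open Set

variable {V : Type*} [Fintype V]

/-- `S` is an independent set in `G`: no two of its vertices are adjacent. -/
def IsIndep (G : SimpleGraph V) (S : Set V) : Prop :=
  ∀ u ∈ S, ∀ v ∈ S, ¬ G.Adj u v

/-- The neighborhood `N(X)` of a set of vertices. -/
def nbhd (G : SimpleGraph V) (X : Set V) : Set V := {v | ∃ u ∈ X, G.Adj u v}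

/-- The difference `d(X) = |X| - |N(X)|` computed in the induced subgraph `G[W]`
(neighborhoods are intersected with `W`). -/
noncomputable def dOn (G : SimpleGraph V) (W X : Set V) : ℤ :=
  (X.ncard : ℤ) - ((nbhd G X ∩ W).ncard : ℤ)

/-- The difference `d(X) = |X| - |N(X)|` in `G`. -/
noncomputable def dG (G : SimpleGraph V) (X : Set V) : ℤ := dOn G Set.univ X

/-- `S` is a critical independent set of the induced subgraph `G[W]`:
it is an independent subset of `W` whose difference attains
`max {d(Y) : Y ⊆ W}` (the critical difference of `G[W]`). -/
def IsCritIndepOn (G : SimpleGraph V) (W S : Set V) : Prop :=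
  S ⊆ W ∧ IsIndep G S ∧ ∀ Y ⊆ W, dOn G W Y ≤ dOn G W S

/-- `S` is a critical independent set of `G`. -/
def IsCritIndep (G : SimpleGraph V) (S : Set V) : Prop := IsCritIndepOn G Set.univ S

/-- A maximum critical independent set of `G[W]`: a critical independent set of
largest cardinality. -/
def IsMaxCritIndepOn (G : SimpleGraph V) (W S : Set V) : Prop :=
  IsCritIndepOn G W S ∧ ∀ T, IsCritIndepOn G W T → T.ncard ≤ S.ncard

/-- A maximum critical independent set of `G`. -/
def IsMaxCritIndep (G : SimpleGraph V) (S : Set V) : Prop := IsMaxCritIndepOn G Set.univ S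

/-- A maximum independent set of the induced subgraph `G[W]`. -/
def IsMaxIndepOn (G : SimpleGraph V) (W S : Set V) : Prop :=
  S ⊆ W ∧ IsIndep G S ∧ ∀ T ⊆ W, IsIndep G T → T.ncard ≤ S.ncard

/-- A maximum independent set of `G`. -/
def IsMaxIndep (G : SimpleGraph V) (S : Set V) : Prop := IsMaxIndepOn G Set.univ S

/-- The independence number of the induced subgraph `G[W]`. -/
noncomputable def alphaOn (G : SimpleGraph V) (W : Set V) : ℕ :=
  sSup {n | ∃ S ⊆ W, IsIndep G S ∧ S.ncard = n}

/-- The independence number `α(G)`. -/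
noncomputable def alpha (G : SimpleGraph V) : ℕ := alphaOn G Set.univ

/-- The maximum matching number `μ(G)`. -/
noncomputable def mu (G : SimpleGraph V) : ℕ :=
  sSup {n | ∃ M : G.Subgraph, M.IsMatching ∧ M.edgeSet.ncard = n}

/-- `G` is a König-Egerváry graph: `α(G) + μ(G) = |V(G)|`. -/
def IsKE (G : SimpleGraph V) : Prop := alpha G + mu G = Fintype.card V

/-- `nucleus(G[W])`: intersection of all maximum critical independent sets of `G[W]`. -/
def nucleusOn (G : SimpleGraph V) (W : Set V) : Set V := ⋂₀ {S | IsMaxCritIndepOn G W S}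

/-- `nucleus(G)`. -/
def nucleus (G : SimpleGraph V) : Set V := nucleusOn G Set.univ

/-- `diadem(G[W])`: union of all maximum critical independent sets of `G[W]`. -/
def diademOn (G : SimpleGraph V) (W : Set V) : Set V := ⋃₀ {S | IsMaxCritIndepOn G W S}

/-- `diadem(G)`. -/
def diadem (G : SimpleGraph V) : Set V := diademOn G Set.univ

/-- `ker(G)`: intersection of all critical independent sets of `G`. -/
def kerG (G : SimpleGraph V) : Set V := ⋂₀ {S | IsCritIndep G S}

/-- `core(G)`: intersection of all maximum independent sets of `G`. -/
def core (G : SimpleGraph V) : Set V := ⋂₀ {S | IsMaxIndep G S}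

/-- `corona(G)`: union of all maximum independent sets of `G`. -/
def corona (G : SimpleGraph V) : Set V := ⋃₀ {S | IsMaxIndep G S}

lemma key_indep_ge (G : SimpleGraph V) (X : Set V) :
    ∃ S : Set V, IsIndep G S ∧ dG G X ≤ dG G S := by
  classical
  set N := nbhd G X with hN
  refine ⟨X \ N, ?_, ?_⟩
  · intro u hu v hv hadj
    exact hv.2 ⟨u, hu.1, hadj⟩
  · have hsub : nbhd G (X \ N) ∪ (X ∩ N) ⊆ N := by
      rintro w (⟨u, hu, hadj⟩ | hw)
      · exact ⟨u, hu.1, hadj⟩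
      · exact hw.2
    have hdisj : Disjoint (nbhd G (X \ N)) (X ∩ N) := by
      rw [Set.disjoint_left]
      rintro w ⟨u, hu, hadj⟩ hw
      exact hu.2 ⟨w, hw.1, hadj.symm⟩
    have h1 : (X \ N).ncard + (X ∩ N).ncard = X.ncard := by
      rw [add_comm]
      exact Set.ncard_inter_add_ncard_diff_eq_ncard X N (Set.toFinite X)
    have h2 : (nbhd G (X \ N)).ncard + (X ∩ N).ncard ≤ N.ncard := by
      rw [← Set.ncard_union_eq hdisj (Set.toFinite _) (Set.toFinite _)]
      exact Set.ncard_le_ncard hsub (Set.toFinite N)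
    simp only [dG, dOn, Set.inter_univ, ← hN]
    omega
lemma dG_le_card (G : SimpleGraph V) (X : Set V) :
    dG G X ≤ (Fintype.card V : ℤ) := by
  have : X.ncard ≤ Fintype.card V := by
    simpa [Set.ncard_univ, Nat.card_eq_fintype_card] using
      Set.ncard_le_ncard (Set.subset_univ X) (Set.toFinite _)
  simp only [dG, dOn]
  omega

/-- The maximum of `d(X)` over all subsets equals the maximum over independent subsets. -/
theorem stmt0 (G : SimpleGraph V) :
    sSup {z : ℤ | ∃ X : Set V, dG G X = z} =
      sSup {z : ℤ | ∃ S : Set V, IsIndep G S ∧ dG G S = z} := by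
  classical
  set A := {z : ℤ | ∃ X : Set V, dG G X = z} with hA
  set B := {z : ℤ | ∃ S : Set V, IsIndep G S ∧ dG G S = z} with hB
  have hBA : B ⊆ A := by rintro z ⟨S, _, hS⟩; exact ⟨S, hS⟩
  have hAbdd : BddAbove A := by
    refine ⟨(Fintype.card V : ℤ), ?_⟩
    rintro z ⟨X, rfl⟩
    exact dG_le_card G X
  have hBbdd : BddAbove B := hAbdd.mono hBA
  have hAne : A.Nonempty := ⟨dG G ∅, ∅, rfl⟩
  have hBne : B.Nonempty := ⟨dG G ∅, ∅, by intro u hu; exact absurd hu (Set.notMem_empty u), rfl⟩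
  refine le_antisymm ?_ (csSup_le_csSup hAbdd hBne hBA)
  refine csSup_le hAne ?_
  rintro z ⟨X, rfl⟩
  obtain ⟨S, hSind, hle⟩ := key_indep_ge G X
  exact le_trans hle (le_csSup hBbdd ⟨S, hSind, rfl⟩)
end

section
/- In any finite simple graph G, every critical independent set is contained in some maximum independent set of G. -/
open Set

variable {V : Type*} [Fintype V]

/-- Every critical independent set is contained in some maximum independent set. -/
theorem stmt1 (G : SimpleGraph V) (S : Set V) (hS : IsCritIndep G S) :
    ∃ T : Set V, IsMaxIndep G T ∧ S ⊆ T := by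
  classical
  obtain ⟨-, hSind, hScrit⟩ := hS
  -- existence of a maximum independent set I
  have hne : ({n | ∃ T : Set V, IsIndep G T ∧ T.ncard = n} : Set ℕ).Nonempty :=
    ⟨0, ∅, fun u hu => absurd hu (notMem_empty u), by simp⟩
  have hbdd : BddAbove ({n | ∃ T : Set V, IsIndep G T ∧ T.ncard = n} : Set ℕ) := by
    refine ⟨Fintype.card V, ?_⟩
    rintro n ⟨T, -, rfl⟩
    simpa [Set.ncard_univ] using Set.ncard_le_ncard (subset_univ T) (toFinite _)
  obtain ⟨I, hIind, hIcard⟩ := Nat.sSup_mem hne hbdd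
  have hImax : ∀ T : Set V, IsIndep G T → T.ncard ≤ I.ncard := fun T hT =>
    hIcard ▸ le_csSup hbdd ⟨T, hT, rfl⟩
  set N := nbhd G S with hN
  have hSNdisj : ∀ v, v ∈ S → v ∉ N := by
    rintro v hvS ⟨u, huS, hadj⟩
    exact hSind u huS v hvS hadj
  set J := S ∪ (I \ (N ∪ S)) with hJ
  have hJind : IsIndep G J := by
    intro u hu v hv
    rcases hu with huS | ⟨huI, hu⟩ <;> rcases hv with hvS | ⟨hvI, hv⟩
    · exact hSind u huS v hvS
    · exact fun h => hv (Or.inl ⟨u, huS, h⟩)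
    · exact fun h => hu (Or.inl ⟨v, hvS, h.symm⟩)
    · exact hIind u huI v hvI
  -- key cardinality facts
  have h2 : nbhd G (S ∩ I) ⊆ N := by rintro v ⟨u, hu, h⟩; exact ⟨u, hu.1, h⟩
  have h1 : I ∩ N ⊆ N \ nbhd G (S ∩ I) := by
    rintro v ⟨hvI, hvN⟩
    refine ⟨hvN, ?_⟩
    rintro ⟨u, ⟨huS, huI⟩, hadj⟩
    exact hIind u huI v hvI hadj
  have e4 : (I ∩ N).ncard + (nbhd G (S ∩ I)).ncard ≤ N.ncard := by
    have := Set.ncard_le_ncard h1 (toFinite _)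
    have h5 := Set.ncard_diff_add_ncard_of_subset h2 (toFinite N)
    omega
  have e5 : ((S ∩ I).ncard : ℤ) - ((nbhd G (S ∩ I)).ncard : ℤ)
      ≤ (S.ncard : ℤ) - (N.ncard : ℤ) := by
    have := hScrit (S ∩ I) (subset_univ _)
    simpa [dOn, Set.inter_univ, hN] using this
  have e1 : J.ncard = S.ncard + (I \ (N ∪ S)).ncard := by
    refine Set.ncard_union_eq ?_ (toFinite _) (toFinite _)
    rw [Set.disjoint_left]
    intro x hxS hx
    exact hx.2 (Or.inr hxS)
  have e2 : (I ∩ (N ∪ S)).ncard + (I \ (N ∪ S)).ncard = I.ncard :=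
    Set.ncard_inter_add_ncard_diff_eq_ncard I (N ∪ S) (toFinite _)
  have e3 : (I ∩ (N ∪ S)).ncard = (I ∩ N).ncard + (S ∩ I).ncard := by
    rw [Set.inter_union_distrib_left]
    rw [show I ∩ S = S ∩ I from Set.inter_comm I S]
    refine Set.ncard_union_eq ?_ (toFinite _) (toFinite _)
    rw [Set.disjoint_left]
    rintro x ⟨hxI, hxN⟩ ⟨hxS, -⟩
    exact hSNdisj x hxS hxN
  have hJge : I.ncard ≤ J.ncard := by omega
  refine ⟨J, ⟨fun _ _ => trivial, hJind, fun T _ hT => le_trans (hImax T hT) hJge⟩,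
    subset_union_left⟩
end

section
/- In any finite simple graph G, each critical independent set is contained in some maximum critical independent set (a critical independent set of maximum cardinality). -/
open Set

variable {V : Type*} [Fintype V]

lemma nbhd_union_aux (G : SimpleGraph V) (A B : Set V) :
    nbhd G (A ∪ B) = nbhd G A ∪ nbhd G B := by
  ext v
  simp only [nbhd, mem_setOf_eq, mem_union]
  constructor
  · rintro ⟨u, hu | hu, h⟩
    exacts [Or.inl ⟨u, hu, h⟩, Or.inr ⟨u, hu, h⟩]
  · rintro (⟨u, hu, h⟩ | ⟨u, hu, h⟩)
    exacts [⟨u, Or.inl hu, h⟩, ⟨u, Or.inr hu, h⟩]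

lemma nbhd_mono_aux (G : SimpleGraph V) {A B : Set V} (h : A ⊆ B) :
    nbhd G A ⊆ nbhd G B := by
  rintro v ⟨u, hu, hadj⟩
  exact ⟨u, h hu, hadj⟩

/-- Every critical independent set is contained in some maximum critical independent set. -/
theorem stmt4 (G : SimpleGraph V) (S : Set V) (hS : IsCritIndep G S) :
    ∃ T : Set V, IsMaxCritIndep G T ∧ S ⊆ T := by
  classical
  set d : Set V → ℤ := fun X => (X.ncard : ℤ) - ((nbhd G X).ncard : ℤ) with hd
  have dOn_eq : ∀ X : Set V, dOn G univ X = d X := by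
    intro X; simp [dOn, hd]
  obtain ⟨-, hSind, hSmax'⟩ := hS
  have hSmax : ∀ Y : Set V, d Y ≤ d S := by
    intro Y
    have := hSmax' Y (subset_univ Y)
    rwa [dOn_eq, dOn_eq] at this
  -- a maximum-cardinality critical independent set `M` exists
  have hScrit : IsCritIndep G S := ⟨subset_univ S, hSind, hSmax'⟩
  obtain ⟨M, hM, hMmax0⟩ :=
    Set.Finite.exists_maximalFor Set.ncard {T | IsCritIndep G T} (Set.toFinite _) ⟨S, hScrit⟩
  have hMmax : ∀ T : Set V, IsCritIndep G T → T.ncard ≤ M.ncard := by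
    intro T hT
    rcases le_or_gt T.ncard M.ncard with h | h
    · exact h
    · exact hMmax0 hT h.le
  obtain ⟨-, hMind, hMmax'⟩ := hM
  have hMcrit : ∀ Y : Set V, d Y ≤ d M := by
    intro Y
    have := hMmax' Y (subset_univ Y)
    rwa [dOn_eq, dOn_eq] at this
  have hdSM : d S = d M := le_antisymm (hMcrit S) (hSmax M)
  -- the key sets
  set C : Set V := M \ nbhd G S with hC
  set D : Set V := M ∩ nbhd G S with hDdef
  set P : Set V := S ∩ nbhd G D with hPdef
  -- independence facts
  have hSnotN : ∀ x ∈ S, x ∉ nbhd G S := by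
    rintro x hx ⟨u, hu, hadj⟩
    exact hSind u hu x hx hadj
  have hMnotN : ∀ x ∈ M, x ∉ nbhd G M := by
    rintro x hx ⟨u, hu, hadj⟩
    exact hMind u hu x hx hadj
  -- Step 1 : D.ncard ≤ P.ncard
  have step1 : D.ncard ≤ P.ncard := by
    have h1 : d (S \ nbhd G D) ≤ d S := hSmax _
    have h2 : P.ncard + (S \ nbhd G D).ncard = S.ncard :=
      Set.ncard_inter_add_ncard_diff_eq_ncard S (nbhd G D)
    have hsub : nbhd G (S \ nbhd G D) ∪ D ⊆ nbhd G S := by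
      apply union_subset
      · exact nbhd_mono_aux G diff_subset
      · exact fun x hx => hx.2
    have hdisj : Disjoint (nbhd G (S \ nbhd G D)) D := by
      rw [Set.disjoint_left]
      rintro v ⟨u, hu, hadj⟩ hvD
      exact hu.2 ⟨v, hvD, hadj.symm⟩
    have h5 : (nbhd G (S \ nbhd G D)).ncard + D.ncard ≤ (nbhd G S).ncard := by
      rw [← Set.ncard_union_eq hdisj (Set.toFinite _) (Set.toFinite _)]
      exact Set.ncard_le_ncard hsub (Set.toFinite _)
    simp only [hd] at h1
    omega
  -- Step 2 : P ⊆ nbhd G D \ nbhd G C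
  have step2 : P ⊆ nbhd G D \ nbhd G C := by
    rintro p ⟨hpS, hpND⟩
    refine ⟨hpND, ?_⟩
    rintro ⟨c, hc, hadj⟩
    exact hc.2 ⟨p, hpS, hadj.symm⟩
  have step2' : P.ncard ≤ (nbhd G D \ nbhd G C).ncard :=
    Set.ncard_le_ncard step2 (Set.toFinite _)
  -- Step 3 : d M ≤ d C
  have hCD : D.ncard + C.ncard = M.ncard :=
    Set.ncard_inter_add_ncard_diff_eq_ncard M (nbhd G S)
  have hMunion : M = C ∪ D := by
    rw [hC, hDdef, Set.diff_union_inter]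
  have hNM : nbhd G M = nbhd G C ∪ nbhd G D := by
    conv_lhs => rw [hMunion]
    exact nbhd_union_aux G C D
  have hNMle : (nbhd G M).ncard = (nbhd G C).ncard + (nbhd G D \ nbhd G C).ncard := by
    rw [hNM, ← Set.union_diff_self]
    exact Set.ncard_union_eq Set.disjoint_sdiff_right (Set.toFinite _) (Set.toFinite _)
  have step3 : d M ≤ d C := by
    simp only [hd]
    omega
  -- Step 4 : supermodularity, d S ≤ d (S ∪ C)
  have hu1 : (S ∪ C).ncard + (S ∩ C).ncard = S.ncard + C.ncard :=
    Set.ncard_union_add_ncard_inter S C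
  have hu2 : (nbhd G S ∪ nbhd G C).ncard + (nbhd G S ∩ nbhd G C).ncard
      = (nbhd G S).ncard + (nbhd G C).ncard :=
    Set.ncard_union_add_ncard_inter _ _
  have hNSC : nbhd G (S ∪ C) = nbhd G S ∪ nbhd G C := nbhd_union_aux G S C
  have hNint : (nbhd G (S ∩ C)).ncard ≤ (nbhd G S ∩ nbhd G C).ncard := by
    refine Set.ncard_le_ncard ?_ (Set.toFinite _)
    exact subset_inter (nbhd_mono_aux G inter_subset_left)
      (nbhd_mono_aux G inter_subset_right)
  have hdint : d (S ∩ C) ≤ d S := hSmax _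
  have step4 : d S ≤ d (S ∪ C) := by
    have h3' : d S ≤ d C := hdSM ▸ step3
    simp only [hd] at h3' hdint ⊢
    rw [hNSC]
    omega
  -- Step 5 : M.ncard ≤ (S ∪ C).ncard
  have hPSM : P ⊆ S \ M := by
    rintro p ⟨hpS, hpND⟩
    refine ⟨hpS, fun hpM => ?_⟩
    obtain ⟨u, huD, hadj⟩ := hpND
    exact hMnotN p hpM ⟨u, huD.1, hadj⟩
  have hPSM' : P.ncard ≤ (S \ M).ncard := Set.ncard_le_ncard hPSM (Set.toFinite _)
  have hSM : (S ∩ M).ncard + (S \ M).ncard = S.ncard :=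
    Set.ncard_inter_add_ncard_diff_eq_ncard S M
  have hSCM : S ∩ C = S ∩ M := by
    ext x
    simp only [hC, mem_inter_iff, mem_diff]
    exact ⟨fun h => ⟨h.1, h.2.1⟩, fun h => ⟨h.1, h.2, fun hx => hSnotN x h.1 hx⟩⟩
  have step5 : M.ncard ≤ (S ∪ C).ncard := by
    rw [hSCM] at hu1
    omega
  -- Independence of S ∪ C
  have hind : IsIndep G (S ∪ C) := by
    rintro u (hu | hu) v (hv | hv) hadj
    · exact hSind u hu v hv hadj
    · exact hv.2 ⟨u, hu, hadj⟩
    · exact hu.2 ⟨v, hv, hadj.symm⟩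
    · exact hMind u hu.1 v hv.1 hadj
  -- Assemble
  refine ⟨S ∪ C, ⟨⟨subset_univ _, hind, fun Y _ => ?_⟩, fun T' hT' => ?_⟩, subset_union_left⟩
  · rw [dOn_eq, dOn_eq]
    exact le_trans (hSmax Y) step4
  · exact le_trans (hMmax T' hT') step5
end

section
/- Let G be a finite simple graph and I a maximum critical independent set with X = I ∪ N(I). Then diadem(G) ∪ N(diadem(G)) = X, where diadem(G) is the union of all maximum critical independent sets of G. -/
open Set

variable {V : Type*} [Fintype V]

section Aux

variable (G : SimpleGraph V)

/-- `dOn` over the whole vertex set, simplified. -/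
lemma dOn_univ (X : Set V) :
    dOn G Set.univ X = (X.ncard : ℤ) - ((nbhd G X).ncard : ℤ) := by
  simp [dOn]

lemma nbhd_mono {A B : Set V} (h : A ⊆ B) : nbhd G A ⊆ nbhd G B := by
  rintro v ⟨u, hu, huv⟩; exact ⟨u, h hu, huv⟩

lemma nbhd_union (A B : Set V) : nbhd G (A ∪ B) = nbhd G A ∪ nbhd G B := by
  ext v
  constructor
  · rintro ⟨u, hu | hu, huv⟩
    · exact Or.inl ⟨u, hu, huv⟩
    · exact Or.inr ⟨u, hu, huv⟩
  · rintro (⟨u, hu, huv⟩ | ⟨u, hu, huv⟩)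
    · exact ⟨u, Or.inl hu, huv⟩
    · exact ⟨u, Or.inr hu, huv⟩

lemma nbhd_inter_subset (A B : Set V) : nbhd G (A ∩ B) ⊆ nbhd G A ∩ nbhd G B := by
  rintro v ⟨u, ⟨huA, huB⟩, huv⟩
  exact ⟨⟨u, huA, huv⟩, ⟨u, huB, huv⟩⟩

variable {G}

/-- Supermodularity of the difference function. -/
lemma dd_supermodular (A B : Set V) :
    dOn G Set.univ A + dOn G Set.univ B ≤
      dOn G Set.univ (A ∪ B) + dOn G Set.univ (A ∩ B) := by
  rw [dOn_univ, dOn_univ, dOn_univ, dOn_univ]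
  have hAB : (A ∪ B).ncard + (A ∩ B).ncard = A.ncard + B.ncard :=
    Set.ncard_union_add_ncard_inter A B (Set.toFinite A) (Set.toFinite B)
  have hN : (nbhd G A ∪ nbhd G B).ncard + (nbhd G A ∩ nbhd G B).ncard
      = (nbhd G A).ncard + (nbhd G B).ncard :=
    Set.ncard_union_add_ncard_inter _ _ (Set.toFinite _) (Set.toFinite _)
  have hNu : nbhd G (A ∪ B) = nbhd G A ∪ nbhd G B := nbhd_union G A B
  have hNi : (nbhd G (A ∩ B)).ncard ≤ (nbhd G A ∩ nbhd G B).ncard :=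
    Set.ncard_le_ncard (nbhd_inter_subset G A B) (Set.toFinite _)
  rw [hNu]
  have := congrArg (Nat.cast : ℕ → ℤ) hAB
  have := congrArg (Nat.cast : ℕ → ℤ) hN
  push_cast at *
  omega

/-- An independent set is disjoint from its neighborhood. -/
lemma indep_disjoint_nbhd {S : Set V} (hS : IsIndep G S) : S ∩ nbhd G S = ∅ := by
  ext v
  simp only [Set.mem_inter_iff, Set.mem_empty_iff_false, iff_false, not_and]
  rintro hv ⟨u, hu, huv⟩
  exact hS u hu v hv huv

/-- Union of two critical sets is critical. -/
lemma crit_union {I J : Set V} (hI : ∀ Y : Set V, dOn G Set.univ Y ≤ dOn G Set.univ I)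
    (hJ : ∀ Y : Set V, dOn G Set.univ Y ≤ dOn G Set.univ J) :
    dOn G Set.univ (I ∪ J) = dOn G Set.univ I := by
  have h1 := dd_supermodular (G := G) I J
  have h2 := hI (I ∪ J)
  have h3 := hI (I ∩ J)
  have h4 := hI J
  have h5 := hJ I
  omega

/-- If `Y` is critical then `Y \ N(Y)` is critical. -/
lemma crit_shed {Y : Set V} (hY : ∀ Z : Set V, dOn G Set.univ Z ≤ dOn G Set.univ Y) :
    dOn G Set.univ (Y \ nbhd G Y) = dOn G Set.univ Y := by
  set K := Y \ nbhd G Y with hK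
  have hsub : Y ∩ nbhd G Y ⊆ Y := Set.inter_subset_left
  have hKcard : K.ncard + (Y ∩ nbhd G Y).ncard = Y.ncard := by
    have : K = Y \ (Y ∩ nbhd G Y) := by
      rw [hK]; ext v; simp only [Set.mem_diff, Set.mem_inter_iff]; tauto
    rw [this]
    exact Set.ncard_diff_add_ncard_of_subset hsub (Set.toFinite Y)
  -- N(K) ⊆ N(Y) \ (Y ∩ N(Y))
  have hNK : nbhd G K ⊆ nbhd G Y \ (Y ∩ nbhd G Y) := by
    rintro v ⟨u, hu, huv⟩
    refine ⟨⟨u, hu.1, huv⟩, ?_⟩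
    rintro ⟨hvY, -⟩
    exact hu.2 ⟨v, hvY, G.adj_symm huv⟩
  have hsub2 : Y ∩ nbhd G Y ⊆ nbhd G Y := Set.inter_subset_right
  have hNYcard : (nbhd G Y \ (Y ∩ nbhd G Y)).ncard + (Y ∩ nbhd G Y).ncard
      = (nbhd G Y).ncard :=
    Set.ncard_diff_add_ncard_of_subset hsub2 (Set.toFinite _)
  have hNKle : (nbhd G K).ncard ≤ (nbhd G Y \ (Y ∩ nbhd G Y)).ncard :=
    Set.ncard_le_ncard hNK (Set.toFinite _)
  have hle := hY K
  rw [dOn_univ, dOn_univ] at *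
  omega

/-- `Y \ N(Y)` is independent. -/
lemma indep_shed (Y : Set V) : IsIndep G (Y \ nbhd G Y) := by
  rintro u ⟨huY, huN⟩ v ⟨hvY, hvN⟩ huv
  exact hvN ⟨u, huY, huv⟩

/-- Every critical independent set is contained in `I ∪ N(I)` for a maximum
critical independent set `I`. -/
lemma crit_indep_subset_X {I T : Set V} (hI : IsMaxCritIndep G I)
    (hT : IsCritIndep G T) : T ⊆ I ∪ nbhd G I := by
  obtain ⟨⟨-, hIind, hIcrit⟩, hImax⟩ := hI
  obtain ⟨-, hTind, hTcrit⟩ := hT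
  have hIcrit' : ∀ Y : Set V, dOn G Set.univ Y ≤ dOn G Set.univ I :=
    fun Y => hIcrit Y (Set.subset_univ Y)
  have hTcrit' : ∀ Y : Set V, dOn G Set.univ Y ≤ dOn G Set.univ T :=
    fun Y => hTcrit Y (Set.subset_univ Y)
  have hIT : dOn G Set.univ (I ∪ T) = dOn G Set.univ I := crit_union hIcrit' hTcrit'
  -- K = (I ∪ T) \ N(I ∪ T) is critical independent
  set K := (I ∪ T) \ nbhd G (I ∪ T) with hKdef
  have hKcrit : dOn G Set.univ K = dOn G Set.univ I := by
    rw [crit_shed (fun Z => (hIcrit' Z).trans hIT.ge), hIT]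
  have hKcrit' : ∀ Y : Set V, dOn G Set.univ Y ≤ dOn G Set.univ K :=
    fun Y => (hIcrit' Y).trans hKcrit.ge
  have hKind : IsIndep G K := indep_shed _
  -- U = I ∪ K is critical independent and contains I
  have hU : dOn G Set.univ (I ∪ K) = dOn G Set.univ I := crit_union hIcrit' hKcrit'
  have hUind : IsIndep G (I ∪ K) := by
    rintro u (hu | hu) v (hv | hv) huv
    · exact hIind u hu v hv huv
    · exact hv.2 ⟨u, Or.inl hu, huv⟩
    · exact hu.2 ⟨v, Or.inl hv, G.adj_symm huv⟩
    · exact hKind u hu v hv huv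
  have hUcrit : IsCritIndep G (I ∪ K) :=
    ⟨Set.subset_univ _, hUind, fun Y _ => (hIcrit' Y).trans hU.ge⟩
  have hUle : (I ∪ K).ncard ≤ I.ncard := hImax _ hUcrit
  have hUeq : I = I ∪ K :=
    Set.eq_of_subset_of_ncard_le Set.subset_union_left hUle (Set.toFinite _)
  -- Hence T \ N(I) ⊆ I
  intro t ht
  by_cases htN : t ∈ nbhd G I
  · exact Or.inr htN
  · left
    rw [hUeq]
    right
    refine ⟨Or.inr ht, ?_⟩
    rw [nbhd_union]
    rintro (h | h)
    · exact htN h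
    · obtain ⟨u, hu, huv⟩ := h
      exact hTind u hu t ht huv

/-- For maximum critical independent sets `I, J`, `N(J) ⊆ I ∪ N(I)`. -/
lemma nbhd_subset_X {I J : Set V} (hI : IsMaxCritIndep G I)
    (hJ : IsMaxCritIndep G J) : nbhd G J ⊆ I ∪ nbhd G I := by
  obtain ⟨⟨-, hIind, hIcrit⟩, hImax⟩ := hI
  obtain ⟨⟨-, hJind, hJcrit⟩, hJmax⟩ := hJ
  have hIcrit' : ∀ Y : Set V, dOn G Set.univ Y ≤ dOn G Set.univ I :=
    fun Y => hIcrit Y (Set.subset_univ Y)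
  have hJcrit' : ∀ Y : Set V, dOn G Set.univ Y ≤ dOn G Set.univ J :=
    fun Y => hJcrit Y (Set.subset_univ Y)
  -- I ⊆ J ∪ N(J)
  have hIX : I ⊆ J ∪ nbhd G J :=
    crit_indep_subset_X ⟨⟨Set.subset_univ _, hJind, hJcrit⟩, hJmax⟩
      ⟨Set.subset_univ _, hIind, hIcrit⟩
  -- h1 : I \ J ⊆ N(J) \ N(I)
  have h1 : I \ J ⊆ nbhd G J \ nbhd G I := by
    rintro i ⟨hiI, hiJ⟩
    refine ⟨(hIX hiI).resolve_left hiJ, ?_⟩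
    rintro ⟨u, hu, huv⟩
    exact hIind u hu i hiI huv
  -- h2 : |J \ I| = |N(J) \ N(I)|
  have hIJ : dOn G Set.univ (I ∪ J) = dOn G Set.univ I := crit_union hIcrit' hJcrit'
  have hcard1 : (I ∪ J).ncard = I.ncard + (J \ I).ncard := by
    rw [show I ∪ J = I ∪ (J \ I) by rw [Set.union_diff_self]]
    exact Set.ncard_union_eq Set.disjoint_sdiff_right (Set.toFinite _) (Set.toFinite _)
  have hcard2 : (nbhd G (I ∪ J)).ncard
      = (nbhd G I).ncard + (nbhd G J \ nbhd G I).ncard := by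
    rw [nbhd_union, show nbhd G I ∪ nbhd G J = nbhd G I ∪ (nbhd G J \ nbhd G I) by
      rw [Set.union_diff_self]]
    exact Set.ncard_union_eq Set.disjoint_sdiff_right (Set.toFinite _) (Set.toFinite _)
  have h2 : (J \ I).ncard = (nbhd G J \ nbhd G I).ncard := by
    rw [dOn_univ, dOn_univ, hcard1, hcard2] at hIJ
    push_cast at hIJ
    omega
  -- h3 : |I \ J| = |J \ I|  (since |I| = |J|)
  have hcardIJ : I.ncard = J.ncard :=
    le_antisymm (hJmax I ⟨Set.subset_univ _, hIind, hIcrit⟩)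
      (hImax J ⟨Set.subset_univ _, hJind, hJcrit⟩)
  have h3 : (I \ J).ncard = (J \ I).ncard := by
    have e1 : (I ∩ J).ncard + (I \ J).ncard = I.ncard :=
      Set.ncard_inter_add_ncard_diff_eq_ncard I J (Set.toFinite _)
    have e2 : (J ∩ I).ncard + (J \ I).ncard = J.ncard :=
      Set.ncard_inter_add_ncard_diff_eq_ncard J I (Set.toFinite _)
    rw [Set.inter_comm] at e2
    omega
  -- h4 : I \ J = N(J) \ N(I)
  have h4 : I \ J = nbhd G J \ nbhd G I :=
    Set.eq_of_subset_of_ncard_le h1 (by omega) (Set.toFinite _)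
  intro v hv
  by_cases hvN : v ∈ nbhd G I
  · exact Or.inr hvN
  · have hm : v ∈ nbhd G J \ nbhd G I := ⟨hv, hvN⟩
    rw [← h4] at hm
    exact Or.inl hm.1

end Aux

/-- For a maximum critical independent set `I` and `X = I ∪ N(I)`,
`diadem(G) ∪ N(diadem(G)) = X`. -/
theorem stmt7 (G : SimpleGraph V) (I X : Set V) (hI : IsMaxCritIndep G I)
    (hX : X = I ∪ nbhd G I) :
    diadem G ∪ nbhd G (diadem G) = X := by
  subst hX
  apply Set.Subset.antisymm
  · rintro v (hv | hv)
    · obtain ⟨J, hJ, hvJ⟩ := hv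
      exact crit_indep_subset_X hI hJ.1 hvJ
    · obtain ⟨u, hu, huv⟩ := hv
      obtain ⟨J, hJ, huJ⟩ := hu
      exact nbhd_subset_X hI hJ ⟨u, huJ, huv⟩
  · rintro v (hv | hv)
    · exact Or.inl ⟨I, hI, hv⟩
    · obtain ⟨u, hu, huv⟩ := hv
      exact Or.inr ⟨u, ⟨I, hI, hu⟩, huv⟩
end

section
/- If G is a finite simple König-Egerváry graph, then diadem(G) = corona(G), i.e., the union of all maximum critical independent sets equals the union of all maximum independent sets. -/
open Set

variable {V : Type*} [Fintype V]

section AuxProofs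

variable {V : Type*} [Fintype V]

lemma indep_ncard_le_alpha (G : SimpleGraph V) {T : Set V} (hT : IsIndep G T) :
    T.ncard ≤ alpha G := by
  apply le_csSup
  · refine ⟨Fintype.card V, ?_⟩
    rintro n ⟨S, -, -, rfl⟩
    simpa [Set.ncard_univ, Nat.card_eq_fintype_card] using
      Set.ncard_le_ncard (Set.subset_univ S) Set.finite_univ
  · exact ⟨T, Set.subset_univ T, hT, rfl⟩

lemma exists_max_indep (G : SimpleGraph V) :
    ∃ S : Set V, IsIndep G S ∧ S.ncard = alpha G := by
  have h : alpha G ∈ {n | ∃ S ⊆ (Set.univ : Set V), IsIndep G S ∧ S.ncard = n} := by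
    apply Nat.sSup_mem
    · exact ⟨0, ∅, by simp [IsIndep]⟩
    · refine ⟨Fintype.card V, ?_⟩
      rintro n ⟨S, -, -, rfl⟩
      simpa [Set.ncard_univ, Nat.card_eq_fintype_card] using
        Set.ncard_le_ncard (Set.subset_univ S) Set.finite_univ
  obtain ⟨S, -, hS, hcard⟩ := h
  exact ⟨S, hS, hcard⟩

lemma exists_max_matching (G : SimpleGraph V) :
    ∃ M : G.Subgraph, M.IsMatching ∧ M.edgeSet.ncard = mu G := by
  have h : mu G ∈ {n | ∃ M : G.Subgraph, M.IsMatching ∧ M.edgeSet.ncard = n} := by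
    apply Nat.sSup_mem
    · refine ⟨0, ⊥, ?_, by simp⟩
      intro v hv
      simp at hv
    · refine ⟨G.edgeSet.ncard, ?_⟩
      rintro n ⟨M, -, rfl⟩
      exact Set.ncard_le_ncard M.edgeSet_subset (Set.toFinite _)
  exact h

lemma two_mul_edgeSet_ncard_le (G : SimpleGraph V) {M : G.Subgraph}
    (hM : M.IsMatching) : 2 * M.edgeSet.ncard ≤ M.verts.ncard := by
  classical
  have hadj : ∀ e : M.edgeSet, M.Adj (Quot.out e.1).1 (Quot.out e.1).2 := by
    intro e
    have h2 := e.2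
    rw [← Quot.out_eq e.1] at h2
    exact (SimpleGraph.Subgraph.mem_edgeSet).1 h2
  have huniq : ∀ {v w w' : V}, M.Adj v w → M.Adj v w' → w = w' :=
    fun h h' => ((hM (M.edge_vert h)).unique h h')
  set f : M.edgeSet × Bool → M.verts := fun p =>
    if p.2 then ⟨(Quot.out p.1.1).1, M.edge_vert (hadj p.1)⟩
    else ⟨(Quot.out p.1.1).2, M.edge_vert (hadj p.1).symm⟩ with hf
  have hinj : Function.Injective f := by
    rintro ⟨e, b⟩ ⟨e', b'⟩ hfe
    have heq : (f (e, b)).1 = (f (e', b')).1 := congrArg Subtype.val hfe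
    have hee : e = e' ∧ b = b' := by
      cases b <;> cases b' <;> simp only [hf, if_true, if_false, Bool.false_eq_true] at heq
      · -- both false : second = second
        have h2 : (Quot.out e.1).1 = (Quot.out e'.1).1 := by
          have := huniq (hadj e).symm (heq ▸ (hadj e').symm)
          exact this
        refine ⟨Subtype.ext ?_, rfl⟩
        rw [← Quot.out_eq e.1, ← Quot.out_eq e'.1]
        congr 1
        exact Prod.ext h2 heq
      · -- b = false, b' = true : (out e).2 = (out e').1
        exfalso
        have h2 : (Quot.out e.1).1 = (Quot.out e'.1).2 := by
          refine huniq (hadj e).symm ?_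
          rw [heq]; exact hadj e'
        have hee : e.1 = e'.1 := by
          rw [← Quot.out_eq e.1, ← Quot.out_eq e'.1]
          have hpe : (Quot.out e.1) = ((Quot.out e'.1).2, (Quot.out e'.1).1) := Prod.ext h2 heq
          rw [hpe]
          exact Sym2.eq_swap
        have hout : Quot.out e.1 = Quot.out e'.1 := by rw [hee]
        rw [hout] at heq
        exact (G.ne_of_adj (M.adj_sub (hadj e'))) heq.symm
      · -- b = true, b' = false : (out e).1 = (out e').2
        exfalso
        have h2 : (Quot.out e.1).2 = (Quot.out e'.1).1 := by
          refine huniq (hadj e) ?_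
          rw [heq]; exact (hadj e').symm
        have hee : e.1 = e'.1 := by
          rw [← Quot.out_eq e.1, ← Quot.out_eq e'.1]
          have hpe : (Quot.out e.1) = ((Quot.out e'.1).2, (Quot.out e'.1).1) := Prod.ext heq h2
          rw [hpe]
          exact Sym2.eq_swap
        have hout : Quot.out e.1 = Quot.out e'.1 := by rw [hee]
        rw [hout] at heq
        exact (G.ne_of_adj (M.adj_sub (hadj e'))) heq
      · have h2 : (Quot.out e.1).2 = (Quot.out e'.1).2 := by
          exact huniq (hadj e) (heq ▸ (hadj e'))
        refine ⟨Subtype.ext ?_, rfl⟩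
        rw [← Quot.out_eq e.1, ← Quot.out_eq e'.1]
        congr 1
        exact Prod.ext heq h2
    exact Prod.ext hee.1 hee.2
  have hcard := Nat.card_le_card_of_injective f hinj
  rw [Nat.card_prod, Nat.card_coe_set_eq, Nat.card_coe_set_eq] at hcard
  simp only [Nat.card_eq_fintype_card, Fintype.card_bool] at hcard
  omega

lemma verts_inter_ncard_le_nbhd (G : SimpleGraph V) {M : G.Subgraph}
    (hM : M.IsMatching) (Y : Set V) :
    (M.verts ∩ Y).ncard ≤ (nbhd G Y).ncard := by
  classical
  have h : ∀ v : ↥(M.verts ∩ Y), ∃ w, M.Adj v.1 w := fun v => (hM v.2.1).exists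
  choose p hp using h
  have hmem : ∀ v, p v ∈ nbhd G Y := fun v => ⟨v.1, v.2.2, M.adj_sub (hp v)⟩
  have hinj : Function.Injective (fun v => (⟨p v, hmem v⟩ : ↥(nbhd G Y))) := by
    intro v v' hv
    have hpv : p v = p v' := congrArg Subtype.val hv
    have h1 : M.Adj (p v) v.1 := (hp v).symm
    have h2 : M.Adj (p v) v'.1 := hpv ▸ (hp v').symm
    exact Subtype.ext ((hM (M.edge_vert h1)).unique h1 h2)
  have hle := Nat.card_le_card_of_injective _ hinj
  rwa [Nat.card_coe_set_eq, Nat.card_coe_set_eq] at hle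

lemma dG_le_card_sub_two_mu (G : SimpleGraph V) (Y : Set V) :
    dG G Y ≤ (Fintype.card V : ℤ) - 2 * mu G := by
  obtain ⟨M, hM, hcard⟩ := exists_max_matching G
  have h1 := two_mul_edgeSet_ncard_le G hM
  have h2 : (M.verts ∩ Y).ncard + (M.verts \ Y).ncard = M.verts.ncard :=
    Set.ncard_inter_add_ncard_diff_eq_ncard _ _
  have h3 := verts_inter_ncard_le_nbhd G hM Y
  have h4 : (M.verts \ Y).ncard ≤ Yᶜ.ncard :=
    Set.ncard_le_ncard (fun v hv => hv.2) (Set.toFinite _)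
  have h5 : Y.ncard + Yᶜ.ncard = Fintype.card V := by
    simpa using Set.ncard_add_ncard_compl Y
  simp only [dG, dOn, Set.inter_univ]
  rw [← hcard]
  omega

lemma maxIndep_iff_maxCritIndep (G : SimpleGraph V) (hKE : IsKE G) (S : Set V) :
    IsMaxIndep G S ↔ IsMaxCritIndep G S := by
  have hforward : ∀ T : Set V, IsMaxIndep G T → IsMaxCritIndep G T := by
    intro T hT
    obtain ⟨-, hTind, hTmax⟩ := hT
    have hTalpha : T.ncard = alpha G := by
      refine le_antisymm (indep_ncard_le_alpha G hTind) ?_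
      obtain ⟨S₀, hS₀ind, hS₀card⟩ := exists_max_indep G
      rw [← hS₀card]
      exact hTmax S₀ (Set.subset_univ _) hS₀ind
    have hnbhd : nbhd G T ⊆ Tᶜ := by
      rintro v ⟨u, huT, hadj⟩ hvT
      exact hTind u huT v hvT hadj
    have hnb : (nbhd G T).ncard ≤ Tᶜ.ncard := Set.ncard_le_ncard hnbhd (Set.toFinite _)
    have hcompl : T.ncard + Tᶜ.ncard = Fintype.card V := by
      simpa using Set.ncard_add_ncard_compl T
    have hdT : (Fintype.card V : ℤ) - 2 * mu G ≤ dOn G Set.univ T := by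
      simp only [dOn, Set.inter_univ]
      have hKE' := hKE
      unfold IsKE at hKE'
      omega
    refine ⟨⟨Set.subset_univ _, hTind, ?_⟩, ?_⟩
    · intro Y _
      exact le_trans (dG_le_card_sub_two_mu G Y) hdT
    · intro T' hT'
      rw [hTalpha]
      exact indep_ncard_le_alpha G hT'.2.1
  constructor
  · exact hforward S
  · rintro ⟨⟨-, hSind, -⟩, hSmax⟩
    obtain ⟨S₀, hS₀ind, hS₀card⟩ := exists_max_indep G
    have hS₀max : IsMaxIndep G S₀ := by
      refine ⟨Set.subset_univ _, hS₀ind, ?_⟩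
      intro T' _ hT'
      rw [hS₀card]
      exact indep_ncard_le_alpha G hT'
    have hS₀crit : IsCritIndep G S₀ := (hforward S₀ hS₀max).1
    have hge : alpha G ≤ S.ncard := hS₀card ▸ hSmax S₀ hS₀crit
    refine ⟨Set.subset_univ _, hSind, ?_⟩
    intro T' _ hT'
    exact le_trans (indep_ncard_le_alpha G hT') hge

end AuxProofs

/-- If `G` is König-Egerváry, then `diadem(G) = corona(G)`. -/
theorem stmt10 (G : SimpleGraph V) (hKE : IsKE G) : diadem G = corona G := by
  have h : {S : Set V | IsMaxCritIndepOn G Set.univ S} = {S | IsMaxIndep G S} := by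
    ext S
    exact (maxIndep_iff_maxCritIndep G hKE S).symm
  unfold diadem diademOn corona
  rw [h]
end
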